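/- Let P ∈ ℝ^{n×n} and Q ∈ ℝ^{m×m} be symmetric positive semidefinite, and let A ∈ ℝ^{n×n}, B ∈ ℝ^{m×m} satisfy P A + Aᵀ P ≼ 0 and Q B + Bᵀ Q ≼ 0. Then, setting C = I_n ⊗ B + A ⊗ I_m, one has (P ⊗ Q) C + Cᵀ (P ⊗ Q) ≼ 0. -/

import Mathlib

open Matrix

noncomputable section

/-- `M ≼ 0` for a (symmetric) matrix: `ξᵀ M ξ ≤ 0` for all `ξ`. -/
def NegSemidef {m : Type*} [Fintype m] (M : Matrix m m ℝ) : Prop :=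
  ∀ x : m → ℝ, x ⬝ᵥ M *ᵥ x ≤ 0

/-- Index type for Kronecker powers: `kronIdx n k` indexes the `(k+1)`-st Kronecker power
of an `n`-dimensional object. -/
def kronIdx (n : ℕ) : ℕ → Type
  | 0 => Fin n
  | k+1 => Fin n × kronIdx n k

instance kronIdxFintype (n : ℕ) : ∀ k, Fintype (kronIdx n k)
  | 0 => inferInstanceAs (Fintype (Fin n))
  | k+1 => @instFintypeProd _ _ _ (kronIdxFintype n k)

instance kronIdxDecEq (n : ℕ) : ∀ k, DecidableEq (kronIdx n k)
  | 0 => inferInstanceAs (DecidableEq (Fin n))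
  | k+1 => @instDecidableEqProd _ _ _ (kronIdxDecEq n k)

/-- `matKronPow M k = ⊗^{k+1} M`, the `(k+1)`-st Kronecker power of the matrix `M`
(so `matKronPow M 0 = ⊗¹M = M`). -/
def matKronPow {n : ℕ} (M : Matrix (Fin n) (Fin n) ℝ) : ∀ k, Matrix (kronIdx n k) (kronIdx n k) ℝ
  | 0 => M
  | k+1 => Matrix.kroneckerMap (· * ·) M (matKronPow M k)

/-- Kronecker product of two vectors. -/
def vecKron {α β : Type*} (u : α → ℝ) (v : β → ℝ) : α × β → ℝ := fun p => u p.1 * v p.2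

/-- `vecKronPow x k = ⊗^{k+1} x`, the `(k+1)`-st Kronecker power of the vector `x`. -/
def vecKronPow {n : ℕ} (x : Fin n → ℝ) : ∀ k, kronIdx n k → ℝ
  | 0 => x
  | k+1 => vecKron x (vecKronPow x k)

/-- The lifted matrices: `liftA A k = 𝒜^{k+1}(A)`, with `𝒜¹(A) = A` and
`𝒜^{k+1}(A) = Iₙ ⊗ 𝒜^k(A) + A ⊗ I_{n^k}`. -/
def liftA {n : ℕ} (A : Matrix (Fin n) (Fin n) ℝ) : ∀ k, Matrix (kronIdx n k) (kronIdx n k) ℝ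
  | 0 => A
  | k+1 => Matrix.kroneckerMap (· * ·) (1 : Matrix (Fin n) (Fin n) ℝ) (liftA A k)
      + Matrix.kroneckerMap (· * ·) A (1 : Matrix (kronIdx n k) (kronIdx n k) ℝ)

/-- Index type of the stacked hierarchy system of degree `i`: blocks `k = 0, …, i-1`
corresponding to Kronecker powers `1, …, i`; its cardinality is `ñ_i = n + n² + ⋯ + nⁱ`. -/
abbrev tildeIdx (n i : ℕ) : Type := Σ k : Fin i, kronIdx n k

/-- `Ãⁱ(A) = diag(𝒜¹(A), 𝒜²(A), …, 𝒜ⁱ(A))`. -/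
def tildeA {n : ℕ} (A : Matrix (Fin n) (Fin n) ℝ) (i : ℕ) :
    Matrix (tildeIdx n i) (tildeIdx n i) ℝ :=
  Matrix.blockDiagonal' (fun k : Fin i => liftA A k)

/-- `diag(P, ⊗²P, …, ⊗ⁱP)`. -/
def tildeKronPow {n : ℕ} (P : Matrix (Fin n) (Fin n) ℝ) (i : ℕ) :
    Matrix (tildeIdx n i) (tildeIdx n i) ℝ :=
  Matrix.blockDiagonal' (fun k : Fin i => matKronPow P k)

/-- `ξ̃_i(x) = (x, ⊗²x, …, ⊗ⁱx)`, the stacked vector of Kronecker powers of `x`. -/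
def tildeXi {n : ℕ} (i : ℕ) (x : Fin n → ℝ) : tildeIdx n i → ℝ :=
  fun p => vecKronPow x p.1 p.2

lemma ns_one_kron {n m : ℕ} (N : Matrix (Fin m) (Fin m) ℝ) (hN : NegSemidef N) :
    NegSemidef (kroneckerMap (· * ·) (1 : Matrix (Fin n) (Fin n) ℝ) N) := by
  intro y
  have key : y ⬝ᵥ (kroneckerMap (· * ·) (1 : Matrix (Fin n) (Fin n) ℝ) N) *ᵥ y
      = ∑ a : Fin n, (fun b => y (a, b)) ⬝ᵥ N *ᵥ (fun b => y (a, b)) := by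
    simp [dotProduct, mulVec, Matrix.one_apply, Fintype.sum_prod_type, Finset.mul_sum,
      Finset.sum_mul, ite_mul, mul_ite]
  rw [key]
  exact Finset.sum_nonpos fun a _ => hN _

lemma ns_kron_one {n m : ℕ} (N : Matrix (Fin n) (Fin n) ℝ) (hN : NegSemidef N) :
    NegSemidef (kroneckerMap (· * ·) N (1 : Matrix (Fin m) (Fin m) ℝ)) := by
  intro y
  have key : y ⬝ᵥ (kroneckerMap (· * ·) N (1 : Matrix (Fin m) (Fin m) ℝ)) *ᵥ y
      = ∑ b : Fin m, (fun a => y (a, b)) ⬝ᵥ N *ᵥ (fun a => y (a, b)) := by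
    simp [dotProduct, mulVec, Matrix.one_apply, Fintype.sum_prod_type, Finset.mul_sum,
      Finset.sum_mul, ite_mul, mul_ite]
    rw [Finset.sum_comm]
  rw [key]
  exact Finset.sum_nonpos fun a _ => hN _

-- sandwich lemma: x ⬝ᵥ (Mᵀ * D * M) *ᵥ x = (M *ᵥ x) ⬝ᵥ D *ᵥ (M *ᵥ x)
example {k : Type*} [Fintype k] (M D : Matrix k k ℝ) (x : k → ℝ) :
    x ⬝ᵥ (Mᵀ * D * M) *ᵥ x = (M *ᵥ x) ⬝ᵥ D *ᵥ (M *ᵥ x) := by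
  rw [← mulVec_mulVec, ← mulVec_mulVec, dotProduct_mulVec, vecMul_transpose]

lemma kron_psd_nsd {n m : ℕ} (P : Matrix (Fin n) (Fin n) ℝ) (hP : P.PosSemidef)
    (N : Matrix (Fin m) (Fin m) ℝ) (hN : NegSemidef N) :
    NegSemidef (kroneckerMap (· * ·) P N) := by
  open scoped MatrixOrder in
  set L := CFC.sqrt P with hLdef
  open scoped MatrixOrder in
  have hL : L * L = P := CFC.sqrt_mul_sqrt_self P hP.nonneg
  open scoped MatrixOrder in
  have hsym : Lᵀ = L := by simpa [IsSymm] using (CFC.sqrt_nonneg P).posSemidef.isHermitian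
  have hfact : kroneckerMap (· * ·) P N
      = (kroneckerMap (· * ·) L (1 : Matrix (Fin m) (Fin m) ℝ))ᵀ
        * kroneckerMap (· * ·) (1 : Matrix (Fin n) (Fin n) ℝ) N
        * kroneckerMap (· * ·) L (1 : Matrix (Fin m) (Fin m) ℝ) := by
    rw [← kroneckerMap_transpose, hsym, transpose_one, ← Matrix.mul_kronecker_mul,
      ← Matrix.mul_kronecker_mul, Matrix.mul_one, Matrix.one_mul, Matrix.mul_one, hL]
  intro x
  rw [hfact, ← mulVec_mulVec, ← mulVec_mulVec, dotProduct_mulVec, vecMul_transpose]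
  exact ns_one_kron N hN _


lemma kron_nsd_psd {n m : ℕ} (N : Matrix (Fin n) (Fin n) ℝ) (hN : NegSemidef N)
    (Q : Matrix (Fin m) (Fin m) ℝ) (hQ : Q.PosSemidef) :
    NegSemidef (kroneckerMap (· * ·) N Q) := by
  open scoped MatrixOrder in
  set L := CFC.sqrt Q with hLdef
  open scoped MatrixOrder in
  have hL : L * L = Q := CFC.sqrt_mul_sqrt_self Q hQ.nonneg
  open scoped MatrixOrder in
  have hsym : Lᵀ = L := by simpa [IsSymm] using (CFC.sqrt_nonneg Q).posSemidef.isHermitian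
  have hfact : kroneckerMap (· * ·) N Q
      = (kroneckerMap (· * ·) (1 : Matrix (Fin n) (Fin n) ℝ) L)ᵀ
        * kroneckerMap (· * ·) N (1 : Matrix (Fin m) (Fin m) ℝ)
        * kroneckerMap (· * ·) (1 : Matrix (Fin n) (Fin n) ℝ) L := by
    rw [← kroneckerMap_transpose, hsym, transpose_one, ← Matrix.mul_kronecker_mul,
      ← Matrix.mul_kronecker_mul, Matrix.mul_one, Matrix.one_mul, Matrix.mul_one, hL]
  intro x
  rw [hfact, ← mulVec_mulVec, ← mulVec_mulVec, dotProduct_mulVec, vecMul_transpose]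
  exact ns_kron_one N hN _

/-- if `P, Q` are symmetric positive semidefinite with `PA + AᵀP ≼ 0` and
`QB + BᵀQ ≼ 0`, then for `C = Iₙ ⊗ B + A ⊗ Iₘ` one has `(P⊗Q)C + Cᵀ(P⊗Q) ≼ 0`. -/
theorem stmt1 {n m : ℕ} (P : Matrix (Fin n) (Fin n) ℝ) (Q : Matrix (Fin m) (Fin m) ℝ)
    (hP : P.PosSemidef) (hQ : Q.PosSemidef)
    (A : Matrix (Fin n) (Fin n) ℝ) (B : Matrix (Fin m) (Fin m) ℝ)
    (hPA : NegSemidef (P * A + Aᵀ * P)) (hQB : NegSemidef (Q * B + Bᵀ * Q))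
    (C : Matrix (Fin n × Fin m) (Fin n × Fin m) ℝ)
    (hC : C = Matrix.kroneckerMap (· * ·) (1 : Matrix (Fin n) (Fin n) ℝ) B
        + Matrix.kroneckerMap (· * ·) A (1 : Matrix (Fin m) (Fin m) ℝ)) :
    NegSemidef (Matrix.kroneckerMap (· * ·) P Q * C + Cᵀ * Matrix.kroneckerMap (· * ·) P Q) := by
  have hPs : Pᵀ = P := by simpa [IsSymm] using hP.isHermitian
  have hQs : Qᵀ = Q := by simpa [IsSymm] using hQ.isHermitian
  have key : Matrix.kroneckerMap (· * ·) P Q * C + Cᵀ * Matrix.kroneckerMap (· * ·) P Q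
      = Matrix.kroneckerMap (· * ·) P (Q * B + Bᵀ * Q)
        + Matrix.kroneckerMap (· * ·) (P * A + Aᵀ * P) Q := by
    subst hC
    rw [transpose_add, ← kroneckerMap_transpose, ← kroneckerMap_transpose,
      transpose_one, transpose_one, Matrix.kronecker_add, Matrix.add_kronecker]
    simp only [Matrix.mul_add, Matrix.add_mul, ← Matrix.mul_kronecker_mul,
      Matrix.mul_one, Matrix.one_mul, hPs, hQs]
    abel
  rw [key]
  intro x
  rw [add_mulVec, dotProduct_add]
  exact add_nonpos (kron_psd_nsd P hP _ hQB x) (kron_nsd_psd _ hPA Q hQ x)
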